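/- Let G be a finite simple graph, k ≥ 3, and L a k-list assignment of G. Let B ⊆ G be a bug whose root r has degree at most 1 in G. Then B is safe in G provided that |B| ≥ 2, or there are no edges between B and G − B, or |G| is not congruent to 0 modulo k. -/

import Mathlib

open SimpleGraph

variable {V : Type*}

/-- `n mod* k`: the unique `m ∈ {1,…,k}` with `n ≡ m (mod k)`. -/
def modStar (n k : ℕ) : ℕ := if n % k = 0 then k else n % k

/-- The degree of vertex `v` in `G`. -/
noncomputable def deg (G : SimpleGraph V) (v : V) : ℕ := Set.ncard {u | G.Adj v u}

/-- The number of edges of the induced subgraph `G[A]`. -/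
noncomputable def edgesWithin (G : SimpleGraph V) (A : Finset V) : ℕ :=
  Set.ncard {e : Sym2 V | e ∈ G.edgeSet ∧ ∀ v ∈ e, v ∈ A}

/-- The number of vertices of degree 1 in `G`. -/
noncomputable def V1count (G : SimpleGraph V) : ℕ := Set.ncard {v | deg G v = 1}

/-- `f` is a strongly equitable (SE) `L`-coloring of the induced subgraph `G[W]`:
a proper coloring from the lists in which every color class has at most
`⌈|W|/k⌉` vertices and at most `|W| mod* k` color classes are full. -/
def IsSEColoringOn [Fintype V] [DecidableEq V] (G : SimpleGraph V) (k : ℕ)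
    (L : V → Finset ℕ) (W : Finset V) (f : V → ℕ) : Prop :=
  (∀ v ∈ W, f v ∈ L v) ∧
  (∀ u ∈ W, ∀ v ∈ W, G.Adj u v → f u ≠ f v) ∧
  (∀ c : ℕ, (W.filter fun v => f v = c).card ≤ (W.card + k - 1) / k) ∧
  ((W.image f).filter fun c => (W.filter fun v => f v = c).card = (W.card + k - 1) / k).card
    ≤ modStar W.card k

/-- `G` is strongly equitably `k`-choosable. -/
def SEChoosable [Fintype V] [DecidableEq V] (G : SimpleGraph V) (k : ℕ) : Prop :=
  ∀ L : V → Finset ℕ, (∀ v, (L v).card = k) → ∃ f : V → ℕ, IsSEColoringOn G k L Finset.univ f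

/-- `S` is safe in `G[U]` (w.r.t. the `k`-list assignment `L`): every SE `L`-coloring of
`G[U] − S` extends to an SE `L`-coloring of `G[U]`. -/
def SafeIn [Fintype V] [DecidableEq V] (G : SimpleGraph V) (k : ℕ)
    (L : V → Finset ℕ) (U S : Finset V) : Prop :=
  ∀ f : V → ℕ, IsSEColoringOn G k L (U \ S) f →
    ∃ g : V → ℕ, (∀ v ∈ U \ S, g v = f v) ∧ IsSEColoringOn G k L U g

/-- The potential `ρ_G^k(A)` (for `k ∈ {3,4}`). -/
noncomputable def rhoA (G : SimpleGraph V) (k : ℕ) (A : Finset V) : ℤ :=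
  (if k = 3 then 6 else 4) * (edgesWithin G A : ℤ) - (if k = 3 then 7 else 5) * (A.card : ℤ)
    + (if k = 3 then 3 else 2) * (Set.ncard {v | v ∈ A ∧ deg G v = 1} : ℤ)

/-- `ρ_G^k`: the maximum of `ρ_G^k(A)` over all `A ⊆ V(G)`. -/
noncomputable def rhoMax [Fintype V] [DecidableEq V] (G : SimpleGraph V) (k : ℕ) : ℤ :=
  ((Finset.univ : Finset (Finset V)).image (rhoA G k)).max'
    (Finset.image_nonempty.mpr ⟨∅, Finset.mem_univ ∅⟩)

/-- `σ_G^k`: `|V_1(G)| mod 2` if `k = 4`, and `0` if `k = 3`. -/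
noncomputable def sigmaK (G : SimpleGraph V) (k : ℕ) : ℤ :=
  if k = 4 then ((V1count G % 2 : ℕ) : ℤ) else 0

/-- `(G, L)` is a minimal counterexample for `k`: `L` is a `k`-list assignment,
`ρ_G^k ≤ 2 − σ_G^k`, `G` has no SE `L`-coloring, and every smaller graph (measured by
`|H| + |V_1(H)|`) satisfying the potential condition is SE colorable from every
`k`-list assignment. -/
def MinCounterexample [Fintype V] [DecidableEq V] (G : SimpleGraph V) (k : ℕ)
    (L : V → Finset ℕ) : Prop :=
  (∀ v, (L v).card = k) ∧
  rhoMax G k ≤ 2 - sigmaK G k ∧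
  (¬ ∃ f : V → ℕ, IsSEColoringOn G k L Finset.univ f) ∧
  ∀ (m : ℕ) (H : SimpleGraph (Fin m)) (L' : Fin m → Finset ℕ),
    (∀ v, (L' v).card = k) →
    rhoMax H k ≤ 2 - sigmaK H k →
    m + V1count H < Fintype.card V + V1count G →
    ∃ f : Fin m → ℕ, IsSEColoringOn H k L' Finset.univ f

/-- `B` is a bug in `G` with root `r`: a connected induced subgraph in which every
vertex other than possibly `r` has degree at most 2 in `G`. -/
def IsBug (G : SimpleGraph V) (B : Finset V) (r : V) : Prop :=
  r ∈ B ∧ (G.induce (↑B : Set V)).Connected ∧ ∀ v ∈ B, v ≠ r → deg G v ≤ 2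

/-- The closed neighborhood `N[B]`. -/
def closedNbhd (G : SimpleGraph V) (B : Finset V) : Set V :=
  {v | v ∈ B ∨ ∃ u ∈ B, G.Adj u v}

/-- `λ_B`: the number of plain 2-threads `P` with `r ∈ P ⊆ N[B]`; such a thread
`s x y a` is recorded by its middle edge `s(x, y)`. -/
noncomputable def lambdaB (G : SimpleGraph V) (B : Finset V) (r : V) : ℕ :=
  Set.ncard {e : Sym2 V | ∃ s x y a : V, e = s(x, y) ∧
    3 ≤ deg G s ∧ deg G x ≤ 2 ∧ deg G y ≤ 2 ∧ 3 ≤ deg G a ∧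
    G.Adj s x ∧ G.Adj x y ∧ G.Adj y a ∧ s ≠ a ∧
    r ∈ ({s, x, y, a} : Set V) ∧
    s ∈ closedNbhd G B ∧ x ∈ closedNbhd G B ∧ y ∈ closedNbhd G B ∧ a ∈ closedNbhd G B}

/-- `v` is a body vertex for root `r`: `v ≠ r` and `v` lies on a loose or closed
thread ending at `r`. -/
def IsBodyVertex (G : SimpleGraph V) (r v : V) : Prop :=
  v ≠ r ∧ 3 ≤ deg G r ∧
    ((∃ (a : V) (P : G.Walk r a), P.IsPath ∧ deg G a = 1 ∧
        (∀ u ∈ P.support, u ≠ r → u ≠ a → deg G u ≤ 2) ∧ v ∈ P.support) ∨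
     (∃ P : G.Walk r r, P.IsCycle ∧
        (∀ u ∈ P.support, u ≠ r → deg G u ≤ 2) ∧ v ∈ P.support))

/-- `π_B`: the number of body vertices in `B`. -/
noncomputable def piB (G : SimpleGraph V) (B : Finset V) (r : V) : ℕ :=
  Set.ncard {v | v ∈ B ∧ IsBodyVertex G r v}

/-- A wishbone: a bug `B` with root `r ∈ V_k(G)`, `d_B(r) = d_G(r)`, `|B| = k+1`,
`λ_B = 0` and `π_B = 2`. -/
def IsWishbone [Fintype V] (G : SimpleGraph V) (k : ℕ) (B : Finset V) (r : V) : Prop :=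
  IsBug G B r ∧ deg G r = k ∧ (∀ u, G.Adj r u → u ∈ B) ∧
    B.card = k + 1 ∧ lambdaB G B r = 0 ∧ piB G B r = 2

/-- A jellyfish: a bug `B` with root `r ∈ V_k(G)`, `d_B(r) = d_G(r)`, `|B| = k+1`,
`λ_B = 0` and `π_B = 1`. -/
def IsJellyfish [Fintype V] (G : SimpleGraph V) (k : ℕ) (B : Finset V) (r : V) : Prop :=
  IsBug G B r ∧ deg G r = k ∧ (∀ u, G.Adj r u → u ∈ B) ∧
    B.card = k + 1 ∧ lambdaB G B r = 0 ∧ piB G B r = 1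

/-- `B` is a maximal bug with root `r`. -/
def IsMaximalBug (G : SimpleGraph V) (B : Finset V) (r : V) : Prop :=
  IsBug G B r ∧ ∀ B' : Finset V, IsBug G B' r → B ⊆ B' → B' = B

/-- A fork: a maximal bug `B = B(r)` with root `r` of degree `k−1` or `k`,
`|B| = d(r) + 2`, `λ_B = 1` and `π_B = 0`. -/
def IsFork (G : SimpleGraph V) (k : ℕ) (B : Finset V) (r : V) : Prop :=
  IsMaximalBug G B r ∧ (deg G r = k - 1 ∨ deg G r = k) ∧
    B.card = deg G r + 2 ∧ lambdaB G B r = 1 ∧ piB G B r = 0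

/-- `X`: the union of all extreme sets of `G` (w.r.t. `ρ_G^k`). -/
noncomputable def extremeUnion [Fintype V] [DecidableEq V] (G : SimpleGraph V) (k : ℕ) : Set V :=
  {v | ∃ A : Finset V, A.Nonempty ∧ rhoA G k A = rhoMax G k ∧ v ∈ A}

/-- `G` has an equitable `k`-coloring: a proper coloring with `k` colors in which the
sizes of any two color classes differ by at most 1. -/
def HasEquitableColoring [Fintype V] [DecidableEq V] (G : SimpleGraph V) (k : ℕ) : Prop :=
  ∃ f : V → Fin k, (∀ ⦃u v⦄, G.Adj u v → f u ≠ f v) ∧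
    ∀ c₁ c₂ : Fin k,
      (Finset.univ.filter fun v => f v = c₁).card ≤ (Finset.univ.filter fun v => f v = c₂).card + 1

section Aux

variable [Fintype V] [DecidableEq V]

def fullCols (k : ℕ) (f : V → ℕ) (W : Finset V) : Finset ℕ :=
  (W.image f).filter fun c => (W.filter fun v => f v = c).card = (W.card + k - 1) / k

noncomputable def nbrs (G : SimpleGraph V) (x : V) (W : Finset V) : Finset V :=
  @Finset.filter _ (fun w => G.Adj x w) (Classical.decPred _) W

lemma mem_nbrs {G : SimpleGraph V} {x w : V} {W : Finset V} :
    w ∈ nbrs G x W ↔ w ∈ W ∧ G.Adj x w := by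
  unfold nbrs
  exact @Finset.mem_filter _ _ (Classical.decPred _) _ _

lemma divmod_eq {k : ℕ} (hk0 : 0 < k) (a q r : ℕ) (h : a = k * q + r) (hr : r < k) :
    a / k = q ∧ a % k = r := by
  subst h
  rw [Nat.mul_add_div hk0, Nat.div_eq_of_lt hr, Nat.mul_add_mod, Nat.mod_eq_of_lt hr]
  exact ⟨by omega, rfl⟩

lemma arith_facts (k n : ℕ) (hk : 3 ≤ k) :
    ∃ q t, n = k * q + t ∧ t < k ∧
      (n + k - 1)/k = q + (if t = 0 then 0 else 1) ∧
      (n + 1 + k - 1)/k = q + 1 ∧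
      (n+1) % k = (if t + 1 = k then 0 else t + 1) ∧
      n % k = t ∧
      modStar n k = (if t = 0 then k else t) ∧
      modStar (n+1) k = (if t + 1 = k then k else t + 1) := by
  have hk0 : 0 < k := by omega
  have hdm := Nat.div_add_mod n k
  have e1 : ∀ m : ℕ, k * (m + 1) = k * m + k := fun m => by ring
  have htk : n % k < k := Nat.mod_lt _ hk0
  have e2 : k * (n / k + 1) = k * (n / k) + k := e1 _
  set q := n / k
  set t := n % k
  refine ⟨q, t, by omega, htk, ?_, ?_, ?_, rfl, rfl, ?_⟩
  · by_cases h : t = 0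
    · have := (divmod_eq hk0 (n + k - 1) q (k - 1) (by omega) (by omega)).1
      rw [this]; simp [h]
    · have := (divmod_eq hk0 (n + k - 1) (q + 1) (t - 1) (by omega) (by omega)).1
      rw [this]; simp [h]
  · exact (divmod_eq hk0 (n + 1 + k - 1) (q + 1) t (by omega) htk).1
  · by_cases h : t + 1 = k
    · have := (divmod_eq hk0 (n + 1) (q + 1) 0 (by omega) (by omega)).2
      rw [this]; simp [h]
    · have := (divmod_eq hk0 (n + 1) q (t + 1) (by omega) (by omega)).2
      rw [this]; simp [h]
  · unfold modStar
    by_cases h : t + 1 = k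
    · have := (divmod_eq hk0 (n + 1) (q + 1) 0 (by omega) (by omega)).2
      rw [this]; simp [h]
    · have := (divmod_eq hk0 (n + 1) q (t + 1) (by omega) (by omega)).2
      rw [this]; simp [h]

lemma step_lemma (G : SimpleGraph V) (k : ℕ) (L : V → Finset ℕ) (hk : 3 ≤ k)
    (W : Finset V) (f : V → ℕ) (x : V) (hLx : (L x).card = k)
    (hxW : x ∉ W) (hf : IsSEColoringOn G k L W f)
    (h2 : (nbrs G x W).card ≤ 2)
    (h1 : W.card % k ≠ 0 → (nbrs G x W).card ≤ 1)
    (hcrit : W.card % k + 1 = k → ∀ w ∈ nbrs G x W,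
        f w ∈ fullCols k f W ∨ (fullCols k f W).card + 2 ≤ k) :
    ∃ c ∈ L x, (∀ w ∈ W, G.Adj x w → f w ≠ c) ∧
      IsSEColoringOn G k L (insert x W) (Function.update f x c) ∧
      (W.card % k + 2 = k →
        c ∈ fullCols k (Function.update f x c) (insert x W) ∨
        (fullCols k (Function.update f x c) (insert x W)).card + 2 ≤ k) := by
  obtain ⟨hf1, hf2, hf3, hf4⟩ := hf
  obtain ⟨q, t, hqt, htk, hceil, hceil', hmod', hmodn, hms, hms'⟩ := arith_facts k W.card hk
  have hFu : (fullCols k f W).card ≤ modStar W.card k := hf4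
  have hforb2 : ((nbrs G x W).image f).card ≤ 2 := le_trans Finset.card_image_le h2
  -- choose the color c
  obtain ⟨c, hcL, hcforb, hcFu⟩ :
      ∃ c ∈ L x, c ∉ (nbrs G x W).image f ∧ (t ≠ 0 → c ∉ fullCols k f W) := by
    by_cases ht0 : t = 0
    · have hne : (L x \ (nbrs G x W).image f).Nonempty := by
        rw [← Finset.card_pos]
        by_contra h
        have h0 : L x \ (nbrs G x W).image f = ∅ := by rw [← Finset.card_eq_zero]; omega
        have := Finset.card_le_card (Finset.sdiff_eq_empty_iff_subset.mp h0)
        omega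
      obtain ⟨c, hc⟩ := hne
      rw [Finset.mem_sdiff] at hc
      exact ⟨c, hc.1, hc.2, fun h => absurd ht0 h⟩
    · have hforb1 : ((nbrs G x W).image f).card ≤ 1 :=
        le_trans Finset.card_image_le (h1 (by rw [hmodn]; exact ht0))
      have hbad : ((nbrs G x W).image f ∪ fullCols k f W).card < k := by
        by_cases hlast : t + 1 = k
        · by_cases hsmall : (fullCols k f W).card + 2 ≤ k
          · have := Finset.card_union_le ((nbrs G x W).image f) (fullCols k f W)
            omega
          · have hsub : (nbrs G x W).image f ⊆ fullCols k f W := by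
              intro c' hc'
              obtain ⟨w, hw, rfl⟩ := Finset.mem_image.mp hc'
              rcases hcrit (by omega) w hw with h | h
              · exact h
              · exact absurd h hsmall
            rw [Finset.union_eq_right.mpr hsub]
            rw [hms, if_neg ht0] at hFu
            omega
        · have h5 : (fullCols k f W).card ≤ t := by rw [hms, if_neg ht0] at hFu; exact hFu
          have := Finset.card_union_le ((nbrs G x W).image f) (fullCols k f W)
          omega
      have hne : (L x \ ((nbrs G x W).image f ∪ fullCols k f W)).Nonempty := by
        rw [← Finset.card_pos]
        by_contra h
        have h0 : L x \ ((nbrs G x W).image f ∪ fullCols k f W) = ∅ := by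
          rw [← Finset.card_eq_zero]; omega
        have := Finset.card_le_card (Finset.sdiff_eq_empty_iff_subset.mp h0)
        omega
      obtain ⟨c, hc⟩ := hne
      rw [Finset.mem_sdiff, Finset.mem_union] at hc
      exact ⟨c, hc.1, fun h => hc.2 (Or.inl h), fun _ h => hc.2 (Or.inr h)⟩
  have hnbc : ∀ w ∈ W, G.Adj x w → f w ≠ c := by
    intro w hw hadj he
    exact hcforb (Finset.mem_image.mpr ⟨w, mem_nbrs.mpr ⟨hw, hadj⟩, he⟩)
  have hgW : ∀ v ∈ W, Function.update f x c v = f v := fun v hv =>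
    Function.update_of_ne (fun h => hxW (by rw [← h]; exact hv)) _ _
  have hgx : Function.update f x c x = c := Function.update_self _ _ _
  have hcardins : (insert x W).card = W.card + 1 := Finset.card_insert_of_notMem hxW
  have hcnt : ∀ c', ((insert x W).filter fun v => Function.update f x c v = c').card
      = (W.filter fun v => f v = c').card + if c' = c then 1 else 0 := by
    intro c'
    have hfc : (W.filter fun v => Function.update f x c v = c')
        = (W.filter fun v => f v = c') :=
      Finset.filter_congr (fun v hv => by rw [hgW v hv])
    rw [Finset.filter_insert, hgx]
    by_cases h : c' = c
    · rw [if_pos h.symm, if_pos h, Finset.card_insert_of_notMem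
        (fun hc => hxW (Finset.mem_of_mem_filter x hc)), hfc]
    · rw [if_neg (fun hh => h hh.symm), if_neg h, hfc, Nat.add_zero]
  have himg : (insert x W).image (Function.update f x c) = insert c (W.image f) := by
    rw [Finset.image_insert, hgx, Finset.image_congr (fun v hv => hgW v hv)]
  have hclsle : ∀ c', (W.filter fun v => f v = c').card ≤ q + (if t = 0 then 0 else 1) := by
    intro c'; have := hf3 c'; rwa [hceil] at this
  have hfull_mem : ∀ c', (W.filter fun v => f v = c').card = q + 1 → t ≠ 0 →
      c' ∈ fullCols k f W := by
    intro c' heq ht0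
    have hcim : c' ∈ W.image f := by
      have hpos : (W.filter fun v => f v = c').Nonempty := by
        rw [← Finset.card_pos]; omega
      obtain ⟨v, hv⟩ := hpos
      rw [Finset.mem_filter] at hv
      exact Finset.mem_image.mpr ⟨v, hv.1, hv.2⟩
    unfold fullCols
    rw [Finset.mem_filter]
    exact ⟨hcim, by rw [hceil, if_neg ht0]; exact heq⟩
  have hcnotfull : t ≠ 0 → (W.filter fun v => f v = c).card ≤ q := by
    intro ht0
    by_contra h
    push_neg at h
    have hle := hclsle c
    rw [if_neg ht0] at hle
    exact hcFu ht0 (hfull_mem c (by omega) ht0)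
  have hceilnew : ((insert x W).card + k - 1) / k = q + 1 := by rw [hcardins]; exact hceil'
  refine ⟨c, hcL, hnbc, ⟨?_, ?_, ?_, ?_⟩, ?_⟩
  · intro v hv
    rcases Finset.mem_insert.mp hv with rfl | hv
    · rw [hgx]; exact hcL
    · rw [hgW v hv]; exact hf1 v hv
  · intro u hu v hv hadj
    rcases Finset.mem_insert.mp hu with hux | hu <;> rcases Finset.mem_insert.mp hv with hvx | hv
    · exfalso; rw [hux, hvx] at hadj; exact G.irrefl hadj
    · rw [hux] at hadj ⊢; rw [hgx, hgW v hv]; exact fun h => hnbc v hv hadj h.symm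
    · rw [hvx] at hadj ⊢; rw [hgx, hgW u hu]; exact hnbc u hu hadj.symm
    · rw [hgW u hu, hgW v hv]; exact hf2 u hu v hv hadj
  · intro c'
    rw [hcnt c', hceilnew]
    by_cases h : c' = c
    · subst h
      rw [if_pos rfl]
      by_cases ht0 : t = 0
      · have h6 := hclsle c'; rw [if_pos ht0] at h6; omega
      · have := hcnotfull ht0; omega
    · rw [if_neg h]
      have h6 := hclsle c'
      by_cases ht0 : t = 0
      · rw [if_pos ht0] at h6; omega
      · rw [if_neg ht0] at h6; omega
  · rw [hcardins, hms']
    by_cases ht0 : t = 0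
    · refine le_trans (Finset.card_le_card (show _ ⊆ ({c} : Finset ℕ) from ?_)) ?_
      · intro c' hc'
        rw [Finset.mem_filter, hcnt c', hceil'] at hc'
        by_cases h : c' = c
        · exact Finset.mem_singleton.mpr h
        · exfalso
          rw [if_neg h] at hc'
          have h6 := hclsle c'
          rw [if_pos ht0] at h6
          omega
      · rw [Finset.card_singleton, if_neg (by omega : ¬ t + 1 = k)]
        omega
    · refine le_trans (Finset.card_le_card
        (show _ ⊆ insert c (fullCols k f W) from ?_)) ?_
      · intro c' hc'
        rw [Finset.mem_filter, hcnt c', hceil'] at hc'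
        by_cases h : c' = c
        · exact Finset.mem_insert.mpr (Or.inl h)
        · refine Finset.mem_insert.mpr (Or.inr ?_)
          rw [if_neg h] at hc'
          exact hfull_mem c' (by omega) ht0
      · have h4 := Finset.card_insert_le c (fullCols k f W)
        have h5 : (fullCols k f W).card ≤ t := by rw [hms, if_neg ht0] at hFu; exact hFu
        by_cases h : t + 1 = k
        · rw [if_pos h]; omega
        · rw [if_neg h]; omega
  · intro hguard
    have ht0 : t ≠ 0 := by omega
    have hcle := hcnotfull ht0
    by_cases hq : (W.filter fun v => f v = c).card = q
    · left
      unfold fullCols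
      rw [Finset.mem_filter]
      constructor
      · rw [himg]; exact Finset.mem_insert_self c _
      · rw [hcnt c, if_pos rfl, hceilnew, hq]
    · right
      have hlt : (W.filter fun v => f v = c).card + 1 ≤ q := by omega
      have hsub : fullCols k (Function.update f x c) (insert x W) ⊆ fullCols k f W := by
        intro c' hc'
        unfold fullCols at hc'
        rw [Finset.mem_filter, hcnt c', hceilnew] at hc'
        by_cases h : c' = c
        · exfalso; subst h; rw [if_pos rfl] at hc'; omega
        · rw [if_neg h] at hc'
          exact hfull_mem c' (by omega) ht0
      have h3 := Finset.card_le_card hsub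
      have h5 : (fullCols k f W).card ≤ t := by rw [hms, if_neg ht0] at hFu; exact hFu
      omega

def CondL [DecidableEq V] (G : SimpleGraph V) (k : ℕ) : Option V → Finset V → List V → Prop
  | _, _, [] => True
  | prev, W, x :: rest =>
      (nbrs G x W).card ≤ 2 ∧
      (W.card % k ≠ 0 → (nbrs G x W).card ≤ 1) ∧
      (W.card % k + 1 = k → ∀ w ∈ nbrs G x W, some w = prev) ∧
      CondL G k (some x) (insert x W) rest

lemma mod_succ_back {k n : ℕ} (hk : 3 ≤ k) (h : (n + 1) % k + 1 = k) : n % k + 2 = k := by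
  obtain ⟨q, t, hqt, htk, _, _, hmod', hmodn, _, _⟩ := arith_facts k n hk
  rw [hmod'] at h
  rw [hmodn]
  by_cases ht : t + 1 = k
  · rw [if_pos ht] at h; omega
  · rw [if_neg ht] at h; omega

lemma chain_lemma (G : SimpleGraph V) (k : ℕ) (L : V → Finset ℕ) (hk : 3 ≤ k)
    (hL : ∀ v, (L v).card = k) :
    ∀ (l : List V) (prev : Option V) (W : Finset V) (f : V → ℕ),
      l.Nodup → (∀ p ∈ l, p ∉ W) → IsSEColoringOn G k L W f →
      CondL G k prev W l →
      (W.card % k + 1 = k → ∀ w, some w = prev →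
        f w ∈ fullCols k f W ∨ (fullCols k f W).card + 2 ≤ k) →
      ∃ g, (∀ v ∈ W, g v = f v) ∧ IsSEColoringOn G k L (W ∪ l.toFinset) g := by
  intro l
  induction l with
  | nil =>
    intro prev W f _ _ hse _ _
    exact ⟨f, fun v _ => rfl, by simpa using hse⟩
  | cons x rest ih =>
    intro prev W f hnd hdisj hse hcond hinv
    obtain ⟨hc2, hc1, hccrit, hcrest⟩ := hcond
    have hxW : x ∉ W := hdisj x (List.mem_cons_self)
    obtain ⟨c, hcL, hcprop, hse', hguar⟩ :=
      step_lemma G k L hk W f x (hL x) hxW hse hc2 hc1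
        (fun hl w hw => hinv hl w (hccrit hl w hw))
    have hnd' : rest.Nodup := (List.nodup_cons.mp hnd).2
    have hxrest : x ∉ rest := (List.nodup_cons.mp hnd).1
    have hdisj' : ∀ p ∈ rest, p ∉ insert x W := by
      intro p hp hmem
      rcases Finset.mem_insert.mp hmem with h | h
      · exact hxrest (h ▸ hp)
      · exact hdisj p (List.mem_cons_of_mem x hp) h
    have hinv' : (insert x W).card % k + 1 = k → ∀ w, some w = some x →
        Function.update f x c w ∈ fullCols k (Function.update f x c) (insert x W) ∨
        (fullCols k (Function.update f x c) (insert x W)).card + 2 ≤ k := by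
      intro hcr w hw
      have hwx : w = x := Option.some.inj hw
      subst hwx
      rw [Finset.card_insert_of_notMem hxW] at hcr
      have := hguar (mod_succ_back hk hcr)
      rw [Function.update_self]
      exact this
    obtain ⟨g, hag, hseg⟩ := ih (some x) (insert x W) (Function.update f x c)
      hnd' hdisj' hse' hcrest hinv'
    refine ⟨g, ?_, ?_⟩
    · intro v hv
      rw [hag v (Finset.mem_insert_of_mem hv),
        Function.update_of_ne (fun h => hxW (by rw [← h]; exact hv)) _ _]
    · have : insert x W ∪ rest.toFinset = W ∪ (x :: rest).toFinset := by
        rw [List.toFinset_cons, Finset.insert_union, Finset.union_insert]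
      rwa [this] at hseg

def Conn (G : SimpleGraph V) (S : Finset V) : Prop :=
  ∀ a ∈ S, ∀ b ∈ S, ∃ w : G.Walk a b, ∀ v ∈ w.support, v ∈ S

lemma card_le_deg (G : SimpleGraph V) (v : V) (T : Finset V)
    (h : ∀ w ∈ T, G.Adj v w) : T.card ≤ deg G v := by
  have hsub : (↑T : Set V) ⊆ {u | G.Adj v u} := fun w hw => h w hw
  calc T.card = (↑T : Set V).ncard := (Set.ncard_coe_finset T).symm
    _ ≤ _ := Set.ncard_le_ncard hsub (Set.toFinite _)

lemma nbrs_card_le_deg (G : SimpleGraph V) (x : V) (W : Finset V) :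
    (nbrs G x W).card ≤ deg G x :=
  card_le_deg G x _ (fun w hw => (mem_nbrs.mp hw).2)

lemma conn_of_induce {G : SimpleGraph V} {B : Finset V}
    (h : (G.induce (↑B : Set V)).Connected) : Conn G B := by
  intro a ha b hb
  have hr : (G.induce (↑B : Set V)).Reachable ⟨a, by simpa⟩ ⟨b, by simpa⟩ :=
    h.preconnected _ _
  obtain ⟨w⟩ := hr
  let φ : G.induce (↑B : Set V) →g G := ⟨Subtype.val, fun {u v} h => h⟩
  refine ⟨w.map φ, ?_⟩
  intro v hv
  rw [Walk.support_map] at hv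
  obtain ⟨u, _, rfl⟩ := List.mem_map.mp hv
  exact Finset.mem_coe.mp u.2

lemma exists_nbr {G : SimpleGraph V} {S : Finset V} (hconn : Conn G S) {x y : V}
    (hx : x ∈ S) (hy : y ∈ S) (hxy : x ≠ y) : ∃ z ∈ S, G.Adj x z := by
  obtain ⟨w, hw⟩ := hconn x hx y hy
  cases w with
  | nil => exact absurd rfl hxy
  | cons hadj p =>
    refine ⟨_, hw _ ?_, hadj⟩
    rw [Walk.support_cons]
    exact List.mem_cons_of_mem _ p.start_mem_support

lemma walk_avoid (G : SimpleGraph V) (S : Finset V) (x x' : V)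
    (hu : ∀ w ∈ S, G.Adj x w → w = x') :
    ∀ (N : ℕ) (a b : V) (w : G.Walk a b), w.length ≤ N →
      (∀ v ∈ w.support, v ∈ S) → a ≠ x → b ≠ x →
      ∃ w' : G.Walk a b, ∀ v ∈ w'.support, v ∈ S ∧ v ≠ x := by
  intro N
  induction N using Nat.strong_induction_on with
  | _ N ihN =>
  intro a b w hlen hsupp ha hb
  by_cases hxs : x ∈ w.support
  · have hspec := w.take_spec hxs
    have hlen2 : (w.takeUntil x hxs).length + (w.dropUntil x hxs).length = w.length := by
      rw [← Walk.length_append, hspec]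
    obtain ⟨v2, hadj2, d2, hdd⟩ := (w.dropUntil x hxs).exists_eq_cons_of_ne (Ne.symm hb)
    obtain ⟨v3, hadj3, t2, htt⟩ := ((w.takeUntil x hxs).reverse).exists_eq_cons_of_ne (Ne.symm ha)
    have hv2S : v2 ∈ S := by
      apply hsupp
      apply Walk.support_dropUntil_subset w hxs
      rw [hdd, Walk.support_cons]
      exact List.mem_cons_of_mem _ d2.start_mem_support
    have hv3S : v3 ∈ S := by
      apply hsupp
      apply Walk.support_takeUntil_subset w hxs
      have hmem : v3 ∈ (w.takeUntil x hxs).reverse.support := by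
        rw [htt, Walk.support_cons]
        exact List.mem_cons_of_mem _ t2.start_mem_support
      rwa [Walk.support_reverse, List.mem_reverse] at hmem
    have e2 : v2 = x' := hu v2 hv2S hadj2
    have e3 : v3 = x' := hu v3 hv3S hadj3
    subst e2; subst e3
    have hlt : (t2.reverse.append d2).length < N := by
      have l1 : (w.takeUntil x hxs).length = t2.length + 1 := by
        rw [← Walk.length_reverse (w.takeUntil x hxs), htt, Walk.length_cons]
      have l2 : (w.dropUntil x hxs).length = d2.length + 1 := by
        rw [hdd, Walk.length_cons]
      rw [Walk.length_append, Walk.length_reverse]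
      omega
    refine ihN (t2.reverse.append d2).length hlt a b _ le_rfl ?_ ha hb
    intro v hv
    rw [Walk.support_append] at hv
    rcases List.mem_append.mp hv with h | h
    · rw [Walk.support_reverse, List.mem_reverse] at h
      have hmem : v ∈ (w.takeUntil x hxs).reverse.support := by
        rw [htt, Walk.support_cons]
        exact List.mem_cons_of_mem _ h
      rw [Walk.support_reverse, List.mem_reverse] at hmem
      exact hsupp v (Walk.support_takeUntil_subset w hxs hmem)
    · apply hsupp
      apply Walk.support_dropUntil_subset w hxs
      rw [hdd, Walk.support_cons]
      exact List.mem_cons_of_mem _ (List.mem_of_mem_tail h)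
  · exact ⟨w, fun v hv => ⟨hsupp v hv, fun h => hxs (h ▸ hv)⟩⟩

lemma conn_erase {G : SimpleGraph V} {S : Finset V} {x x' : V}
    (hu : ∀ w ∈ S, G.Adj x w → w = x') (hconn : Conn G S) :
    Conn G (S.erase x) := by
  intro a ha b hb
  rw [Finset.mem_erase] at ha hb
  obtain ⟨w, hw⟩ := hconn a ha.2 b hb.2
  obtain ⟨w', hw'⟩ := walk_avoid G S x x' hu w.length a b w le_rfl hw ha.1 hb.1
  exact ⟨w', fun v hv => Finset.mem_erase.mpr ⟨(hw' v hv).2, (hw' v hv).1⟩⟩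

/-- neighbor characterization along a path: `p` is the predecessor option; the last
element may additionally be adjacent to `after`. -/
def NC (G : SimpleGraph V) (after : Option V) : Option V → List V → Prop
  | _, [] => True
  | p, [x] => ∀ w, G.Adj x w → some w = p ∨ some w = after
  | p, x :: y :: rest => (∀ w, G.Adj x w → some w = p ∨ w = y) ∧ NC G after (some x) (y :: rest)

lemma condL_of_NC (G : SimpleGraph V) (k : ℕ) (hk : 3 ≤ k) :
    ∀ (tl : List V) (p : V) (W : Finset V), tl.Nodup → (∀ q ∈ tl, q ∉ W) →
      NC G none (some p) tl → CondL G k (some p) W tl := by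
  intro tl
  induction tl with
  | nil => intro p W _ _ _; trivial
  | cons x rest ih =>
    intro p W hnd hdisj hnc
    have hsub : ∀ w ∈ nbrs G x W, w = p := by
      intro w hw
      rw [mem_nbrs] at hw
      cases rest with
      | nil =>
        rcases hnc w hw.2 with h | h
        · exact Option.some.inj h
        · exact absurd h (by simp)
      | cons y rest' =>
        rcases hnc.1 w hw.2 with h | h
        · exact Option.some.inj h
        · exact absurd hw.1 (h ▸ hdisj y (by simp))
    have hcard : (nbrs G x W).card ≤ 1 :=
      Finset.card_le_one.mpr (fun a ha b hb => by rw [hsub a ha, hsub b hb])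
    refine ⟨le_trans hcard (by omega), fun _ => hcard,
      fun _ w hw => by rw [hsub w hw], ?_⟩
    cases rest with
    | nil => trivial
    | cons y rest' =>
      apply ih x (insert x W) (List.nodup_cons.mp hnd).2
      · intro q hq hmem
        rcases Finset.mem_insert.mp hmem with h | h
        · exact (List.nodup_cons.mp hnd).1 (h ▸ hq)
        · exact hdisj q (List.mem_cons_of_mem _ hq) h
      · exact hnc.2

def lastP (p : Option V) (tl : List V) : Option V :=
  match tl.getLast? with
  | some z => some z
  | none => p

lemma NC_concat (G : SimpleGraph V) (after : Option V) (x : V) :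
    ∀ (tl : List V) (p : Option V), NC G (some x) p tl →
      (∀ w, G.Adj x w → some w = lastP p tl ∨ some w = after) →
      NC G after p (tl ++ [x]) := by
  intro tl
  induction tl with
  | nil =>
    intro p _ hx
    intro w hw
    simpa [lastP] using hx w hw
  | cons z rest ih =>
    intro p hnc hx
    cases rest with
    | nil =>
      constructor
      · intro w hw
        rcases hnc w hw with h | h
        · exact Or.inl h
        · exact Or.inr (Option.some.inj h)
      · intro w hw
        simpa [lastP] using hx w hw
    | cons z2 rest2 =>
      refine ⟨hnc.1, ?_⟩
      apply ih (some z) hnc.2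
      intro w hw
      rcases hx w hw with h | h
      · left
        rwa [lastP, List.getLast?_cons_cons] at h
      · exact Or.inr h

lemma enum2 (G : SimpleGraph V) :
    ∀ (m : ℕ) (S : Finset V), S.card ≤ m → ∀ (x : V) (after : Option V), x ∈ S → Conn G S →
      (∀ v ∈ S, v ≠ x → deg G v ≤ 2) →
      (∀ w, G.Adj x w → w ∈ S ∨ some w = after) →
      ((nbrs G x S).card ≤ 1) →
      ∃ (h : V) (tl : List V), (h :: tl).Nodup ∧ (h :: tl).toFinset = S ∧
        (h :: tl).getLast? = some x ∧
        (∃ eo : Option V, ∀ w, G.Adj h w → some w = tl.head? ∨ some w = eo ∨ some w = after) ∧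
        NC G after (some h) tl := by
  intro m
  induction m with
  | zero =>
    intro S hS x after hx _ _ _ _
    rw [Nat.le_zero, Finset.card_eq_zero] at hS
    exact absurd (hS ▸ hx) (Finset.notMem_empty x)
  | succ m ih =>
    intro S hS x after hx hconn hdeg hlast hS1
    by_cases hsing : S = {x}
    · refine ⟨x, [], by simp, by simp [hsing], by simp, ⟨none, ?_⟩, trivial⟩
      intro w hw
      rcases hlast w hw with h | h
      · rw [hsing, Finset.mem_singleton] at h
        exact absurd (h ▸ hw) G.irrefl
      · exact Or.inr (Or.inr h)
    · obtain ⟨y, hy, hyx⟩ : ∃ y ∈ S, y ≠ x := by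
        by_contra hcon
        push_neg at hcon
        exact hsing (Finset.eq_singleton_iff_unique_mem.mpr ⟨hx, hcon⟩)
      obtain ⟨x', hx'S, hadjxx'⟩ := exists_nbr hconn hx hy (Ne.symm hyx)
      have hu : ∀ w ∈ S, G.Adj x w → w = x' := fun w hw haw =>
        Finset.card_le_one.mp hS1 w (mem_nbrs.mpr ⟨hw, haw⟩) x' (mem_nbrs.mpr ⟨hx'S, hadjxx'⟩)
      have hx'x : x' ≠ x := fun h => G.irrefl (h ▸ hadjxx')
      have hx'S' : x' ∈ S.erase x := Finset.mem_erase.mpr ⟨hx'x, hx'S⟩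
      have hconn' : Conn G (S.erase x) := conn_erase hu hconn
      have hcards : (S.erase x).card ≤ m := by
        have := Finset.card_erase_of_mem hx
        have : 1 ≤ S.card := Finset.card_pos.mpr ⟨x, hx⟩
        omega
      have hdeg' : ∀ v ∈ S.erase x, v ≠ x' → deg G v ≤ 2 := fun v hv _ =>
        hdeg v (Finset.mem_of_mem_erase hv) (Finset.mem_erase.mp hv).1
      have hdegx' : deg G x' ≤ 2 := hdeg x' hx'S hx'x
      by_cases hsing' : S.erase x = {x'}
      · -- l = [x', x]
        refine ⟨x', [x], by simp [hx'x], ?_, by simp, ?_, ?_⟩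
        · have : S = insert x (S.erase x) := (Finset.insert_erase hx).symm
          rw [this, hsing']
          simp [Finset.pair_comm]
        · by_cases hE : ∃ w, G.Adj x' w ∧ w ≠ x
          · obtain ⟨w0, hw0a, hw0x⟩ := hE
            refine ⟨some w0, ?_⟩
            intro w hw
            by_cases h1 : w = x
            · exact Or.inl (by rw [h1]; rfl)
            by_cases h2 : w = w0
            · exact Or.inr (Or.inl (by rw [h2]))
            exfalso
            have hc3 : ({x, w0, w} : Finset V).card = 3 := by
              rw [Finset.card_insert_of_notMem (by simp [Ne.symm hw0x, Ne.symm h1]),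
                Finset.card_insert_of_notMem (by simp [Ne.symm h2]),
                Finset.card_singleton]
            have := card_le_deg G x' {x, w0, w} ?_
            · omega
            · intro u hu
              rcases Finset.mem_insert.mp hu with h | h
              · rw [h]; exact hadjxx'.symm
              rcases Finset.mem_insert.mp h with h | h
              · rw [h]; exact hw0a
              · rw [Finset.mem_singleton.mp h]; exact hw
          · push_neg at hE
            refine ⟨none, ?_⟩
            intro w hw
            exact Or.inl (by rw [hE w hw]; rfl)
        · intro w hw
          rcases hlast w hw with h | h
          · exact Or.inl (by rw [hu w h hw])
          · exact Or.inr h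
      · -- recurse
        obtain ⟨y', hy'S', hy'x'⟩ : ∃ y' ∈ S.erase x, y' ≠ x' := by
          by_contra hcon
          push_neg at hcon
          exact hsing' (Finset.eq_singleton_iff_unique_mem.mpr ⟨hx'S', hcon⟩)
        have hlast' : ∀ w, G.Adj x' w → w ∈ S.erase x ∨ some w = some x := by
          intro w hw
          by_cases h1 : w = x
          · exact Or.inr (by rw [h1])
          by_cases h2 : w ∈ S.erase x
          · exact Or.inl h2
          exfalso
          obtain ⟨z', hz'S', hadjz'⟩ := exists_nbr hconn' hx'S' hy'S' (Ne.symm hy'x')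
          have hz'x : z' ≠ x := (Finset.mem_erase.mp hz'S').1
          have hc3 : ({x, w, z'} : Finset V).card = 3 := by
            rw [Finset.card_insert_of_notMem (by simp [Ne.symm h1, Ne.symm hz'x]),
              Finset.card_insert_of_notMem (by simp only [Finset.mem_singleton]; exact fun h => h2 (by rw [h]; exact hz'S')),
              Finset.card_singleton]
          have := card_le_deg G x' {x, w, z'} ?_
          · omega
          · intro u hu
            rcases Finset.mem_insert.mp hu with h | h
            · rw [h]; exact hadjxx'.symm
            rcases Finset.mem_insert.mp h with h | h
            · rw [h]; exact hw
            · rw [Finset.mem_singleton.mp h]; exact hadjz'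
        have hS1' : (nbrs G x' (S.erase x)).card ≤ 1 := by
          have hxnot : x ∉ nbrs G x' (S.erase x) := by
            rw [mem_nbrs]
            exact fun h => (Finset.mem_erase.mp h.1).1 rfl
          have hT := card_le_deg G x' (insert x (nbrs G x' (S.erase x))) ?_
          · rw [Finset.card_insert_of_notMem hxnot] at hT
            omega
          · intro u hu
            rcases Finset.mem_insert.mp hu with h | h
            · rw [h]; exact hadjxx'.symm
            · exact (mem_nbrs.mp h).2
        obtain ⟨h, tl', hnd', htf', hlast'', ⟨eo', heo'⟩, hnc'⟩ :=
          ih (S.erase x) hcards x' (some x) hx'S' hconn' hdeg' hlast' hS1'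
        have hxS' : x ∉ S.erase x := Finset.notMem_erase x S
        have hxl' : x ∉ h :: tl' := by
          rw [← List.mem_toFinset, htf']
          exact hxS'
        refine ⟨h, tl' ++ [x], ?_, ?_, ?_, ?_, ?_⟩
        · have : (h :: tl') ++ [x] = h :: (tl' ++ [x]) := rfl
          rw [← this, List.nodup_append]
          exact ⟨hnd', by simp, fun a ha b hb hab => hxl' (by rwa [hab, List.mem_singleton.mp hb] at ha)⟩
        · have e : (h :: (tl' ++ [x])) = (h :: tl') ++ [x] := rfl
          rw [e, List.toFinset_append, htf']
          simp
          simpa using Finset.insert_erase hx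
        · have e : (h :: (tl' ++ [x])) = (h :: tl') ++ [x] := rfl
          rw [e, List.getLast?_concat]
        · refine ⟨eo', ?_⟩
          intro w hw
          rcases heo' w hw with h1 | h2 | h3
          · cases tl' with
            | nil => simp at h1
            | cons c l2 => exact Or.inl (by simpa using h1)
          · exact Or.inr (Or.inl h2)
          · -- w = x
            have hwx : w = x := Option.some.inj h3
            cases tl' with
            | nil =>
              left
              simp [hwx]
            | cons c l2 =>
              exfalso
              have hhS : h ∈ S := Finset.mem_of_mem_erase (by
                rw [← htf']; exact List.mem_toFinset.mpr (by simp))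
              have hadjxh : G.Adj x h := by rw [hwx] at hw; exact hw.symm
              have : h = x' := hu h hhS hadjxh
              have hlast3 : x' ∈ c :: l2 := by
                have := hlast''
                rw [List.getLast?_cons_cons] at this
                have h9 := List.mem_getLast?_eq_getLast (l := c :: l2) (x := x')
                  (by rw [Option.mem_def]; exact this)
                obtain ⟨hne, heq⟩ := h9
                rw [heq]
                exact List.getLast_mem hne
              rw [← this] at hlast3
              exact (List.nodup_cons.mp hnd').1 hlast3
        · apply NC_concat G after x tl' (some h) hnc'
          intro w hw
          rcases hlast w hw with h1 | h1
          · left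
            have hwx' : w = x' := hu w h1 hw
            cases tl' with
            | nil =>
              have : h = x' := by simpa using hlast''
              rw [lastP]
              simp [hwx', this]
            | cons c l2 =>
              have : (c :: l2).getLast? = some x' := by
                have := hlast''
                rwa [List.getLast?_cons_cons] at this
              rw [lastP]
              simp [this, hwx']
          · exact Or.inr h1

end Aux

/-- Let `B ⊆ G` be a bug whose root `r` has degree at most 1 in `G`. Then
`B` is safe in `G` provided `|B| ≥ 2`, or there are no edges between `B` and `G − B`, or
`|G| ≢ 0 (mod k)`. -/
theorem stmt10 {V : Type*} [Fintype V] [DecidableEq V] (G : SimpleGraph V)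
    (k : ℕ) (hk : 3 ≤ k) (L : V → Finset ℕ) (hL : ∀ v, (L v).card = k)
    (B : Finset V) (r : V) (hbug : IsBug G B r)
    (hdr : deg G r ≤ 1)
    (hcase : 2 ≤ B.card ∨ (∀ u ∈ B, ∀ w, w ∉ B → ¬ G.Adj u w) ∨ Fintype.card V % k ≠ 0) :
    SafeIn G k L Finset.univ B := by
  intro f hf
  set W0 := Finset.univ \ B with hW0def
  have hrB : r ∈ B := hbug.1
  have hconnB : Conn G B := conn_of_induce hbug.2.1
  have hdegB : ∀ v ∈ B, v ≠ r → deg G v ≤ 2 := hbug.2.2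
  have hnotW0 : ∀ p, p ∈ B → p ∉ W0 := by
    intro p hp hmem
    rw [hW0def, Finset.mem_sdiff] at hmem
    exact hmem.2 hp
  have hW0B : W0 ∪ B = Finset.univ := Finset.sdiff_union_of_subset (Finset.subset_univ B)
  have hncard : 1 ≤ Fintype.card V := by
    have : 0 < (Finset.univ : Finset V).card := Finset.card_pos.mpr ⟨r, Finset.mem_univ r⟩
    rwa [Finset.card_univ] at this
  have hW0card : W0.card + B.card = Fintype.card V := by
    rw [hW0def, Finset.card_sdiff_of_subset (Finset.subset_univ B), Finset.card_univ]
    have : B.card ≤ Fintype.card V := by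
      rw [← Finset.card_univ]; exact Finset.card_le_card (Finset.subset_univ B)
    omega
  by_cases hb2 : 2 ≤ B.card
  · -- |B| ≥ 2
    obtain ⟨y, hyB, hyr⟩ := Finset.exists_mem_ne (s := B) (by omega) r
    obtain ⟨z, hzB, hadjrz⟩ := exists_nbr hconnB hrB hyB (Ne.symm hyr)
    have hrnbr : ∀ w, G.Adj r w → w ∈ B := by
      intro w hw
      by_cases hwz : w = z
      · rw [hwz]; exact hzB
      exfalso
      have hc2 : ({z, w} : Finset V).card = 2 := by
        rw [Finset.card_insert_of_notMem (by simp [Ne.symm hwz]), Finset.card_singleton]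
      have := card_le_deg G r {z, w} ?_
      · omega
      · intro u hu
        rcases Finset.mem_insert.mp hu with h | h
        · rw [h]; exact hadjrz
        · rw [Finset.mem_singleton.mp h]; exact hw
    have hlastB : ∀ w, G.Adj r w → w ∈ B ∨ some w = (none : Option V) :=
      fun w hw => Or.inl (hrnbr w hw)
    have hS1B : (nbrs G r B).card ≤ 1 := le_trans (nbrs_card_le_deg G r B) hdr
    obtain ⟨h, tl, hnd, htf, hlastr, ⟨eo, heo⟩, hnc⟩ :=
      enum2 G B.card B le_rfl r none hrB hconnB hdegB hlastB hS1B
    have hmemB : ∀ p ∈ h :: tl, p ∈ B := fun p hp => htf ▸ List.mem_toFinset.mpr hp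
    cases tl with
    | nil =>
      exfalso
      have : B.card = 1 := by rw [← htf]; simp
      omega
    | cons y1 tl2 =>
    have hy1B : y1 ∈ B := hmemB y1 (by simp)
    have hhB : h ∈ B := hmemB h (by simp)
    by_cases hcr0 : W0.card % k + 1 = k
    · -- reorder: color y1 first, then h, then the rest
      have hy1empty : nbrs G y1 W0 = ∅ := by
        rw [Finset.eq_empty_iff_forall_notMem]
        intro w hw
        rw [mem_nbrs] at hw
        have hwnB : w ∉ B := by
          have := hw.1; rw [hW0def, Finset.mem_sdiff] at this; exact this.2
        cases tl2 with
        | nil =>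
          rcases hnc w hw.2 with h1 | h1
          · exact hwnB (Option.some.inj h1 ▸ hhB)
          · simp at h1
        | cons z2 tl3 =>
          rcases hnc.1 w hw.2 with h1 | h1
          · exact hwnB (Option.some.inj h1 ▸ hhB)
          · exact hwnB (h1 ▸ hmemB z2 (by simp))
      have hy1W0 : y1 ∉ W0 := hnotW0 y1 hy1B
      have hW1card : (insert y1 W0).card = W0.card + 1 := Finset.card_insert_of_notMem hy1W0
      have hmod0 : (W0.card + 1) % k = 0 := by
        obtain ⟨q, t, _, _, _, _, hmod', hmodn, _, _⟩ := arith_facts k W0.card hk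
        rw [hmodn] at hcr0
        rw [hmod', if_pos hcr0]
      have hmod1 : (W0.card + 2) % k = 1 := by
        obtain ⟨q, t, _, _, _, _, hmod', hmodn, _, _⟩ := arith_facts k (W0.card + 1) hk
        rw [hmod0] at hmodn
        rw [show W0.card + 2 = W0.card + 1 + 1 from rfl, hmod', ← hmodn,
          if_neg (by omega)]
      have hcond : CondL G k none W0 (y1 :: h :: tl2) := by
        refine ⟨?_, ?_, ?_, ?_⟩
        · rw [hy1empty]; simp
        · intro _; rw [hy1empty]; simp
        · intro _ w hw; rw [hy1empty] at hw; simp at hw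
        · refine ⟨?_, ?_, ?_, ?_⟩
          · -- h has ≤ 2 nbrs in insert y1 W0
            have hsub : nbrs G h (insert y1 W0) ⊆ insert y1 eo.toFinset := by
              intro w hw
              rw [mem_nbrs] at hw
              rcases Finset.mem_insert.mp hw.1 with h1 | h1
              · exact Finset.mem_insert.mpr (Or.inl h1)
              · rcases heo w hw.2 with h2 | h2 | h2
                · exact Finset.mem_insert.mpr (Or.inl (by simpa using h2))
                · exact Finset.mem_insert.mpr (Or.inr (Option.mem_toFinset.mpr h2.symm))
                · simp at h2
            refine le_trans (Finset.card_le_card hsub) ?_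
            refine le_trans (Finset.card_insert_le _ _) ?_
            have : eo.toFinset.card ≤ 1 := by cases eo <;> simp
            omega
          · intro hne
            exfalso
            rw [hW1card] at hne
            exact hne hmod0
          · intro hcr
            exfalso
            rw [hW1card, hmod0] at hcr
            omega
          · cases tl2 with
            | nil => trivial
            | cons z2 tl3 =>
              have hhmem : h ∉ y1 :: z2 :: tl3 := (List.nodup_cons.mp hnd).1
              have hnd2 := (List.nodup_cons.mp hnd).2
              have hy1mem : y1 ∉ z2 :: tl3 := (List.nodup_cons.mp hnd2).1
              have hnd3 := (List.nodup_cons.mp hnd2).2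
              have hz2mem : z2 ∉ tl3 := (List.nodup_cons.mp hnd3).1
              have hndtl3 : tl3.Nodup := (List.nodup_cons.mp hnd3).2
              have hz2sub : ∀ w ∈ nbrs G z2 (insert h (insert y1 W0)), w = y1 := by
                intro w hw
                rw [mem_nbrs] at hw
                obtain ⟨hwmem, hwadj⟩ := hw
                have hwy1 : w = y1 ∨ w ∈ tl3 := by
                  cases tl3 with
                  | nil =>
                    rcases hnc.2 w hwadj with h1 | h1
                    · exact Or.inl (Option.some.inj h1)
                    · simp at h1
                  | cons z3 tl4 =>
                    rcases hnc.2.1 w hwadj with h1 | h1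
                    · exact Or.inl (Option.some.inj h1)
                    · exact Or.inr (by simp [h1])
                rcases hwy1 with h1 | h1
                · exact h1
                · exfalso
                  have hwB : w ∈ B := hmemB w (by simp [h1])
                  rcases Finset.mem_insert.mp hwmem with h2 | h2
                  · rw [h2] at h1
                    exact hhmem (List.mem_cons_of_mem _ (List.mem_cons_of_mem _ h1))
                  rcases Finset.mem_insert.mp h2 with h3 | h3
                  · rw [h3] at h1
                    exact hy1mem (List.mem_cons_of_mem _ h1)
                  · exact hnotW0 w hwB h3
              have hz2card : (nbrs G z2 (insert h (insert y1 W0))).card ≤ 1 :=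
                Finset.card_le_one.mpr (fun a ha b hb => by
                  rw [hz2sub a ha, hz2sub b hb])
              refine ⟨le_trans hz2card (by omega), fun _ => hz2card, ?_, ?_⟩
              · intro hcr
                exfalso
                have hcc : (insert h (insert y1 W0)).card = W0.card + 2 := by
                  rw [Finset.card_insert_of_notMem, hW1card]
                  intro hcon
                  rcases Finset.mem_insert.mp hcon with h1 | h1
                  · exact hhmem (by rw [h1]; exact List.mem_cons_self)
                  · exact hnotW0 h hhB h1
                rw [hcc, hmod1] at hcr
                omega
              · cases tl3 with
                | nil => trivial
                | cons z3 tl4 =>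
                  apply condL_of_NC G k hk
                  · exact hndtl3
                  · intro q hq hmem
                    have hqB : q ∈ B := hmemB q (List.mem_cons_of_mem _
                      (List.mem_cons_of_mem _ (List.mem_cons_of_mem _ hq)))
                    rcases Finset.mem_insert.mp hmem with h1 | h1
                    · rw [h1] at hq; exact hz2mem hq
                    rcases Finset.mem_insert.mp h1 with h2 | h2
                    · rw [h2] at hq
                      exact hhmem (List.mem_cons_of_mem _ (List.mem_cons_of_mem _ hq))
                    rcases Finset.mem_insert.mp h2 with h3 | h3
                    · rw [h3] at hq
                      exact hy1mem (List.mem_cons_of_mem _ hq)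
                    · exact hnotW0 q hqB h3
                  · exact hnc.2.2
      have hndl : (y1 :: h :: tl2).Nodup := by
        have hh : h ∉ y1 :: tl2 := (List.nodup_cons.mp hnd).1
        have hy : y1 ∉ tl2 := (List.nodup_cons.mp (List.nodup_cons.mp hnd).2).1
        have ht : tl2.Nodup := (List.nodup_cons.mp (List.nodup_cons.mp hnd).2).2
        refine List.nodup_cons.mpr ⟨?_, List.nodup_cons.mpr ⟨?_, ht⟩⟩
        · intro hcon
          rcases List.mem_cons.mp hcon with h1 | h1
          · exact hh (by rw [h1]; exact List.mem_cons_self)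
          · exact hy h1
        · intro hcon
          exact hh (List.mem_cons_of_mem _ hcon)
      have hdisjl : ∀ p ∈ y1 :: h :: tl2, p ∉ W0 := by
        intro p hp
        apply hnotW0
        apply hmemB
        simp at hp ⊢
        tauto
      obtain ⟨g, hag, hseg⟩ := chain_lemma G k L hk hL (y1 :: h :: tl2) none W0 f
        hndl hdisjl hf hcond (fun _ w hw => by simp at hw)
      have hset : W0 ∪ (y1 :: h :: tl2).toFinset = Finset.univ := by
        have e : (y1 :: h :: tl2).toFinset = (h :: y1 :: tl2).toFinset := by
          simp only [List.toFinset_cons]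
          exact Finset.insert_comm y1 h tl2.toFinset
        rw [e, htf, hW0B]
      rw [hset] at hseg
      exact ⟨g, hag, hseg⟩
    · -- straightforward order h :: y1 :: tl2
      have hcond : CondL G k none W0 (h :: y1 :: tl2) := by
        have haux : ∀ w ∈ nbrs G h W0, some w = eo := by
          intro w hw
          rw [mem_nbrs] at hw
          have hwnB : w ∉ B := by
            have := hw.1; rw [hW0def, Finset.mem_sdiff] at this; exact this.2
          rcases heo w hw.2 with h1 | h1 | h1
          · exfalso
            exact hwnB (by
              have : w = y1 := by simpa using h1
              rw [this]; exact hy1B)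
          · exact h1
          · simp at h1
        refine ⟨?_, ?_, ?_, ?_⟩
        · refine le_trans (?_ : (nbrs G h W0).card ≤ 1) (by omega)
          exact Finset.card_le_one.mpr (fun a ha b hb =>
            Option.some.inj ((haux a ha).trans (haux b hb).symm))
        · intro _
          exact Finset.card_le_one.mpr (fun a ha b hb =>
            Option.some.inj ((haux a ha).trans (haux b hb).symm))
        · intro hcr
          exact absurd hcr hcr0
        · apply condL_of_NC G k hk
          · exact (List.nodup_cons.mp hnd).2
          · intro q hq hmem
            rcases Finset.mem_insert.mp hmem with h1 | h1
            · exact (List.nodup_cons.mp hnd).1 (h1 ▸ hq)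
            · exact hnotW0 q (hmemB q (List.mem_cons_of_mem _ hq)) h1
          · exact hnc
      obtain ⟨g, hag, hseg⟩ := chain_lemma G k L hk hL (h :: y1 :: tl2) none W0 f
        hnd (fun p hp => hnotW0 p (hmemB p hp)) hf hcond (fun _ w hw => by simp at hw)
      have hset : W0 ∪ (h :: y1 :: tl2).toFinset = Finset.univ := by rw [htf, hW0B]
      rw [hset] at hseg
      exact ⟨g, hag, hseg⟩
  · -- |B| = 1, so B = {r}
    have hb1 : B.card = 1 := by
      have : 1 ≤ B.card := Finset.card_pos.mpr ⟨r, hrB⟩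
      omega
    have hBr : B = {r} := by
      obtain ⟨a, ha⟩ := Finset.card_eq_one.mp hb1
      rw [ha]
      rw [ha, Finset.mem_singleton] at hrB
      rw [hrB]
    have hcond : CondL G k none W0 [r] := by
      refine ⟨?_, ?_, ?_, trivial⟩
      · exact le_trans (nbrs_card_le_deg G r W0) (by omega)
      · intro _
        exact le_trans (nbrs_card_le_deg G r W0) hdr
      · intro hcr w hw
        exfalso
        rcases hcase with h1 | h1 | h1
        · exact hb2 h1
        · rw [mem_nbrs] at hw
          have hwnB : w ∉ B := by
            have := hw.1; rw [hW0def, Finset.mem_sdiff] at this; exact this.2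
          exact h1 r hrB w hwnB hw.2
        · apply h1
          obtain ⟨q, t, _, _, _, _, hmod', hmodn, _, _⟩ := arith_facts k W0.card hk
          rw [hmodn] at hcr
          have : (W0.card + 1) % k = 0 := by rw [hmod', if_pos hcr]
          rwa [show W0.card + 1 = Fintype.card V by omega] at this
    obtain ⟨g, hag, hseg⟩ := chain_lemma G k L hk hL [r] none W0 f
      (by simp) (by simp [hnotW0 r hrB]) hf hcond (fun _ w hw => by simp at hw)
    have hset : W0 ∪ [r].toFinset = Finset.univ := by
      have : [r].toFinset = B := by simp [hBr]
      rw [this, hW0B]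
    rw [hset] at hseg
    exact ⟨g, hag, hseg⟩
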